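/- arXiv:2006.15086 — 2 statements merged into one kernel-verified Lean document; each statement's English description precedes it below -/
import Mathlib

section
/- For μ̂ ∈ P_a^{(n)}, λ ∈ ℤʳ, and 0 ≤ i ≤ r−1 with s_i^{(n)}λ ≠ λ, one has γ(s_i^{(n)} * μ̂; λ) = γ(μ̂; s_i^{(n)} λ), where on the left s_i^{(n)} acts linearly on P_a^{(n)} and on the right it acts affinely on ℤʳ. -/
private lemma prod_flip_reindex {M : Type*} [CommMonoid M] {m : ℕ} (τ : Equiv.Perm (Fin m))
    (hτ : ∀ x, τ (τ x) = x) (F : Fin m × Fin m → M) :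
    (∏ p ∈ Finset.univ.filter (fun p : Fin m × Fin m => p.1 < p.2), F p)
      = ∏ p ∈ Finset.univ.filter (fun p : Fin m × Fin m => p.1 < p.2),
          F (if τ p.1 < τ p.2 then (τ p.1, τ p.2) else (τ p.2, τ p.1)) := by
  set S := Finset.univ.filter (fun p : Fin m × Fin m => p.1 < p.2) with hS
  have hmemS : ∀ p : Fin m × Fin m, p ∈ S ↔ p.1 < p.2 := by
    intro p; simp [hS]
  set f : Fin m × Fin m → Fin m × Fin m :=
    fun p => if τ p.1 < τ p.2 then (τ p.1, τ p.2) else (τ p.2, τ p.1) with hf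
  have hfmem : ∀ p ∈ S, f p ∈ S := by
    intro p hp
    rw [hmemS] at hp
    rw [hmemS]
    by_cases h : τ p.1 < τ p.2
    · simp [hf, h]
    · have hne : τ p.1 ≠ τ p.2 := fun hc => (ne_of_lt hp) (τ.injective hc)
      have h21 : τ p.2 < τ p.1 := lt_of_le_of_ne (not_lt.mp h) (Ne.symm hne)
      simp [hf, h, h21]
  have hff : ∀ p ∈ S, f (f p) = p := by
    intro p hp
    rw [hmemS] at hp
    by_cases h : τ p.1 < τ p.2
    · have h2 : τ (τ p.1) < τ (τ p.2) := by rw [hτ, hτ]; exact hp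
      have e1 : f p = (τ p.1, τ p.2) := by simp only [hf]; rw [if_pos h]
      have e2 : f (τ p.1, τ p.2) = (τ (τ p.1), τ (τ p.2)) := by
        simp only [hf]; rw [if_pos h2]
      rw [e1, e2, hτ, hτ]
    · have hne : τ p.1 ≠ τ p.2 := fun hc => (ne_of_lt hp) (τ.injective hc)
      have h21 : τ p.2 < τ p.1 := lt_of_le_of_ne (not_lt.mp h) (Ne.symm hne)
      have h2 : ¬ τ (τ p.2) < τ (τ p.1) := by rw [hτ, hτ]; exact not_lt.mpr (le_of_lt hp)
      have e1 : f p = (τ p.2, τ p.1) := by simp only [hf]; rw [if_neg h]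
      have e2 : f (τ p.2, τ p.1) = (τ (τ p.1), τ (τ p.2)) := by
        simp only [hf]; rw [if_neg h2]
      rw [e1, e2, hτ, hτ]
  show (∏ p ∈ S, F p) = ∏ p ∈ S, F (f p)
  exact Finset.prod_nbij' f f hfmem hfmem hff hff (fun p hp => by rw [hff p hp])

private lemma adj_flip {m : ℕ} (a b p1 p2 : Fin m) (hab : (b : ℕ) = (a : ℕ) + 1)
    (h12 : p1 < p2) (hflip : ¬ Equiv.swap a b p1 < Equiv.swap a b p2) :
    p1 = a ∧ p2 = b := by
  rw [Fin.lt_def] at h12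
  rw [Equiv.swap_apply_def, Equiv.swap_apply_def, Fin.lt_def] at hflip
  refine ⟨Fin.ext ?_, Fin.ext ?_⟩ <;>
    (split_ifs at hflip <;> simp_all [Fin.ext_iff] <;> omega)



/-- γ(μ̂; λ) for μ̂ = nν + sn²δ ∈ P_a⁽ⁿ⁾ (recorded by the pair (ν, s)) and λ ∈ ℤʳ:
γ(μ̂; λ) = q^{−sn − (nν,λ)/n} · ∏_{α ∈ Φ₊} σ((λ, α))^{(nν,α)/n}. -/
def gammaF {F : Type*} [Field F] (r : ℕ) (q : F) (σ : ℤ → F) (n : ℕ)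
    (ν : Fin (r + 2) → ℤ) (s : ℤ) (lam : Fin (r + 2) → ℤ) : F :=
  q ^ (-(s * (n : ℤ)) - ∑ i, ν i * lam i) *
    ∏ p ∈ Finset.univ.filter (fun p : Fin (r + 2) × Fin (r + 2) => p.1 < p.2),
      σ (lam p.1 - lam p.2) ^ (ν p.1 - ν p.2)

/-- The linear action of s_i⁽ⁿ⁾ on P_a⁽ⁿ⁾ = nℤʳ ⊕ n²ℤδ written in the coordinates
nν + sn²δ ↦ (ν, s): for i ≠ 0 it permutes ν; for i = 0,
s₀⁽ⁿ⁾ * (nν + sn²δ) = n(s_θν) + (s + ν₁ − ν_r)n²δ. -/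
def linActScaled (r : ℕ) (i : Fin (r + 2)) (p : (Fin (r + 2) → ℤ) × ℤ) :
    (Fin (r + 2) → ℤ) × ℤ :=
  if i = 0 then
    (p.1 ∘ Equiv.swap 0 (Fin.last (r + 1)), p.2 + (p.1 0 - p.1 (Fin.last (r + 1))))
  else (p.1 ∘ Equiv.swap (i - 1) i, p.2)

/-- The affine action of s_i⁽ⁿ⁾ on ℤʳ. -/
def affActZ (r : ℕ) (n : ℤ) (i : Fin (r + 2)) (v : Fin (r + 2) → ℤ) : Fin (r + 2) → ℤ :=
  if i = 0 then
    fun j => if j = 0 then v (Fin.last (r + 1)) + n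
      else if j = Fin.last (r + 1) then v 0 - n else v j
  else v ∘ Equiv.swap (i - 1) i

/-- for μ̂ ∈ P_a⁽ⁿ⁾, λ ∈ ℤʳ and 0 ≤ i ≤ r−1 with s_i⁽ⁿ⁾λ ≠ λ,
γ(s_i⁽ⁿ⁾ * μ̂; λ) = γ(μ̂; s_i⁽ⁿ⁾λ). -/
theorem stmt5 {F : Type*} [Field F] (r n : ℕ) (hn : 0 < n)
    (k q : F) (hk : k ≠ 0) (hq : q ≠ 0)
    (G : ℤ → F) (hG0 : G 0 = k) (hGinv : ∀ a : ℤ, G a * G (-a) = 1)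
    (hGper : ∀ a : ℤ, G a = G (a % (n : ℤ))) (hGne : ∀ a : ℤ, G a ≠ 0)
    (σ : ℤ → F) (hσ : ∀ a : ℤ, σ a = if 0 < a ∧ (n : ℤ) ∣ a then k⁻¹ else G a)
    (i : Fin (r + 2)) (ν : Fin (r + 2) → ℤ) (s : ℤ) (lam : Fin (r + 2) → ℤ)
    (hmove : affActZ r n i lam ≠ lam) :
    gammaF r q σ n (linActScaled r i (ν, s)).1 (linActScaled r i (ν, s)).2 lam
      = gammaF r q σ n ν s (affActZ r n i lam) := by
  have hn' : (0:ℤ) < (n:ℤ) := by exact_mod_cast hn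
  have hσ0 : σ 0 = k := by rw [hσ]; simp [hG0]
  have hσN : σ (n:ℤ) = k⁻¹ := by rw [hσ, if_pos ⟨hn', dvd_refl _⟩]
  have hGmod : ∀ a : ℤ, (n:ℤ) ∣ a → G a = k := by
    intro a ha
    rw [hGper a, Int.emod_eq_zero_of_dvd ha, hG0]
  have hinv : ∀ a : ℤ, a ≠ 0 → σ a * σ (-a) = 1 := by
    intro a ha
    by_cases hd : (n:ℤ) ∣ a
    · rcases lt_or_gt_of_ne ha with hneg | hpos
      · have h1 : σ a = k := by
          rw [hσ, if_neg (by rintro ⟨h1, -⟩; omega), hGmod a hd]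
        have h2 : σ (-a) = k⁻¹ := by
          rw [hσ, if_pos ⟨by omega, (dvd_neg).mpr hd⟩]
        rw [h1, h2, mul_inv_cancel₀ hk]
      · have h1 : σ a = k⁻¹ := by rw [hσ, if_pos ⟨hpos, hd⟩]
        have h2 : σ (-a) = k := by
          rw [hσ, if_neg (by rintro ⟨h1, -⟩; omega), hGmod _ ((dvd_neg).mpr hd)]
        rw [h1, h2, inv_mul_cancel₀ hk]
    · have h1 : σ a = G a := by rw [hσ, if_neg (fun h => hd h.2)]
      have h2 : σ (-a) = G (-a) := by rw [hσ, if_neg (fun h => hd (dvd_neg.mp h.2))]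
      rw [h1, h2, hGinv]
  have hper : ∀ a : ℤ, a ≠ 0 → σ (a + n) = σ a := by
    intro a ha
    by_cases hd : (n:ℤ) ∣ a
    · by_cases hpos : 0 < a
      · have hd2 : (n:ℤ) ∣ a + n := dvd_add hd (dvd_refl _)
        rw [hσ (a+n), if_pos ⟨by omega, hd2⟩, hσ a, if_pos ⟨hpos, hd⟩]
      · have ha' : a < 0 := lt_of_le_of_ne (not_lt.mp hpos) ha
        have hle : a + (n:ℤ) ≤ 0 := by
          obtain ⟨t, rfl⟩ := hd
          have ht : t < 0 := by nlinarith
          nlinarith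
        have hmod : (a + (n:ℤ)) % n = a % n := by
          have : a + (n:ℤ) = a + n * 1 := by ring
          rw [this, Int.add_mul_emod_self_left]
        rw [hσ (a+n), if_neg (by rintro ⟨h1, -⟩; omega), hσ a,
          if_neg (by rintro ⟨h1, -⟩; omega), hGper (a+n), hmod, ← hGper a]
    · have hd2 : ¬ (n:ℤ) ∣ a + n := by
        intro h
        apply hd
        have := dvd_sub h (dvd_refl (n:ℤ))
        simpa using this
      have hmod : (a + (n:ℤ)) % n = a % n := by
          have : a + (n:ℤ) = a + n * 1 := by ring
          rw [this, Int.add_mul_emod_self_left]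
      rw [hσ (a+n), if_neg (fun h => hd2 h.2), hσ a, if_neg (fun h => hd h.2),
        hGper (a+n), hmod, ← hGper a]
  have hC : ∀ a : ℤ, a ≠ 0 → ∀ c : ℤ, σ a ^ c = σ (-a) ^ (-c) := by
    intro a ha c
    have h1 : σ a ^ c * σ (-a) ^ c = 1 := by
      rw [← mul_zpow, hinv a ha, one_zpow]
    rw [zpow_neg]
    exact eq_inv_of_mul_eq_one_left h1
  have hA : ∀ a c : ℤ, σ (a + n) ^ c = σ (-a) ^ (-c) := by
    intro a c
    by_cases ha : a = 0
    · subst ha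
      rw [zero_add, neg_zero, hσN, hσ0, zpow_neg, inv_zpow]
    · rw [hper a ha]; exact hC a ha c
  have hB : ∀ a : ℤ, a ≠ -(n:ℤ) → ∀ c : ℤ, σ (a + 2*n) ^ c = σ (-a) ^ (-c) := by
    intro a ha c
    have h2 : a + 2*(n:ℤ) = (a + n) + n := by ring
    rw [h2, hper (a + n) (by omega)]
    exact hA a c
  by_cases hi : i = 0
  · subst hi
    have hL0 : (Fin.last (r+1) : Fin (r+2)) ≠ 0 := by
      simp [Fin.ext_iff]
    set L := Fin.last (r+1) with hLdef
    set τ : Equiv.Perm (Fin (r+2)) := Equiv.swap 0 L with hτdef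
    have hττ : ∀ x, τ (τ x) = x := fun x => Equiv.swap_apply_self _ _ _
    have hne : lam L - lam 0 ≠ -(n:ℤ) := by
      intro h
      apply hmove
      rw [affActZ, if_pos rfl]
      funext j
      by_cases hj0 : j = 0
      · subst hj0; rw [if_pos rfl, ← hLdef]; omega
      · by_cases hjL : j = L
        · subst hjL; rw [if_neg hL0, if_pos rfl]; omega
        · rw [if_neg hj0, if_neg hjL]
    rw [gammaF, gammaF, linActScaled, affActZ, if_pos rfl, if_pos rfl]
    simp only [Function.comp_apply, Function.comp]
    have hsum : (∑ j, ν j * (if j = 0 then lam L + (n:ℤ) else if j = L then lam 0 - n else lam j))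
        = (∑ j, ν (τ j) * lam j) + ((n:ℤ) * ν 0 - (n:ℤ) * ν L) := by
      rw [← Equiv.sum_comp τ
        (fun j => ν j * (if j = 0 then lam L + (n:ℤ) else if j = L then lam 0 - n else lam j))]
      have hterm : ∀ j : Fin (r+2),
          ν (τ j) * (if τ j = 0 then lam L + (n:ℤ) else if τ j = L then lam 0 - n else lam (τ j))
            = ν (τ j) * lam j
              + ((if j = L then (n:ℤ) * ν 0 else 0) - (if j = 0 then (n:ℤ) * ν L else 0)) := by
        intro j
        by_cases hj0 : j = 0
        · subst hj0
          rw [hτdef, Equiv.swap_apply_left, if_neg hL0, if_pos rfl,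
            if_neg (Ne.symm hL0), if_pos rfl]
          ring
        · by_cases hjL : j = L
          · subst hjL
            rw [hτdef, Equiv.swap_apply_right, if_pos rfl, if_pos rfl, if_neg hL0]
            ring
          · rw [hτdef, Equiv.swap_apply_of_ne_of_ne hj0 hjL, if_neg hj0, if_neg hjL,
              if_neg hjL, if_neg hj0]
            ring
      rw [Finset.sum_congr rfl (fun j _ => hterm j), Finset.sum_add_distrib,
        Finset.sum_sub_distrib, Finset.sum_ite_eq' Finset.univ L (fun _ => (n:ℤ) * ν 0),
        Finset.sum_ite_eq' Finset.univ (0 : Fin (r+2)) (fun _ => (n:ℤ) * ν L)]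
      simp
    congr 1
    · congr 1
      rw [hsum]; ring
    · refine Eq.trans ?_ (prod_flip_reindex τ hττ
        (fun p => σ ((if p.1 = 0 then lam L + (n:ℤ) else if p.1 = L then lam 0 - n else lam p.1)
          - (if p.2 = 0 then lam L + (n:ℤ) else if p.2 = L then lam 0 - n else lam p.2))
            ^ (ν p.1 - ν p.2))).symm
      apply Finset.prod_congr rfl
      intro p hp
      have hp' : p.1 < p.2 := by simpa using hp
      obtain ⟨p1, p2⟩ := p
      simp only at hp' ⊢
      have hp2ne0 : p2 ≠ 0 := by
        intro h; rw [h] at hp'; exact Fin.not_lt_zero p1 hp'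
      have hp1neL : p1 ≠ L := by
        intro h; rw [h] at hp'; exact absurd hp' (not_lt.mpr (Fin.le_last p2))
      by_cases h1 : p1 = 0
      · by_cases h2 : p2 = L
        · rw [h1, h2]
          have hcond : ¬ τ 0 < τ L := by
            rw [hτdef, Equiv.swap_apply_left, Equiv.swap_apply_right]
            exact Fin.not_lt_zero L
          rw [if_neg hcond]
          simp only [hτdef, Equiv.swap_apply_left, Equiv.swap_apply_right]
          simp only [if_true, if_neg hL0, if_neg (Ne.symm hL0)]
          have e : (lam L + (n:ℤ)) - (lam 0 - n) = (lam L - lam 0) + 2*n := by ring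
          rw [e, hB (lam L - lam 0) hne (ν 0 - ν L), neg_sub, neg_sub]
          rw [← hLdef, Equiv.swap_apply_right]
        · rw [h1]
          have hcond : ¬ τ 0 < τ p2 := by
            rw [hτdef, Equiv.swap_apply_left, Equiv.swap_apply_of_ne_of_ne hp2ne0 h2]
            exact not_lt.mpr (Fin.le_last p2)
          rw [if_neg hcond]
          simp only [hτdef, Equiv.swap_apply_left, Equiv.swap_apply_of_ne_of_ne hp2ne0 h2]
          simp only [if_true, if_neg hp2ne0, if_neg h2, if_neg hL0]
          have e : lam p2 - (lam 0 - (n:ℤ)) = (lam p2 - lam 0) + n := by ring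
          rw [e, hA (lam p2 - lam 0) (ν p2 - ν L), neg_sub, neg_sub]
          rw [← hLdef, Equiv.swap_apply_of_ne_of_ne hp2ne0 h2]
      · by_cases h2 : p2 = L
        · rw [h2]
          have hcond : ¬ τ p1 < τ L := by
            rw [hτdef, Equiv.swap_apply_right, Equiv.swap_apply_of_ne_of_ne h1 hp1neL]
            exact Fin.not_lt_zero p1
          rw [if_neg hcond]
          simp only [hτdef, Equiv.swap_apply_right, Equiv.swap_apply_of_ne_of_ne h1 hp1neL]
          simp only [if_true, if_neg h1, if_neg hp1neL]
          have e : (lam L + (n:ℤ)) - lam p1 = (lam L - lam p1) + n := by ring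
          rw [e, hA (lam L - lam p1) (ν 0 - ν p1), neg_sub, neg_sub]
          rw [← hLdef, Equiv.swap_apply_of_ne_of_ne h1 hp1neL, Equiv.swap_apply_right]
        · have hcond : τ p1 < τ p2 := by
            rw [hτdef, Equiv.swap_apply_of_ne_of_ne h1 hp1neL,
              Equiv.swap_apply_of_ne_of_ne hp2ne0 h2]
            exact hp'
          rw [if_pos hcond]
          simp only [hτdef, Equiv.swap_apply_of_ne_of_ne h1 hp1neL,
            Equiv.swap_apply_of_ne_of_ne hp2ne0 h2]
          rw [if_neg h1, if_neg hp1neL, if_neg hp2ne0, if_neg h2]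
          rw [← hLdef, Equiv.swap_apply_of_ne_of_ne h1 hp1neL, Equiv.swap_apply_of_ne_of_ne hp2ne0 h2]
  · have hab : (i : ℕ) = ((i - 1 : Fin (r+2)) : ℕ) + 1 := by
      have h0 : (i : ℕ) ≠ 0 := by
        intro h; exact hi (Fin.ext (by rw [h, Fin.val_zero]))
      rw [Fin.coe_sub_one, if_neg hi]
      omega
    set τ : Equiv.Perm (Fin (r+2)) := Equiv.swap (i-1) i with hτdef
    have hττ : ∀ x, τ (τ x) = x := fun x => Equiv.swap_apply_self _ _ _
    have hlam : lam (i-1) ≠ lam i := by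
      intro h
      apply hmove
      rw [affActZ, if_neg hi]
      funext j
      simp only [Function.comp_apply]
      rcases eq_or_ne j (i-1) with rfl | hj1
      · rw [Equiv.swap_apply_left]; exact h.symm
      rcases eq_or_ne j i with rfl | hj2
      · rw [Equiv.swap_apply_right]; exact h
      · rw [Equiv.swap_apply_of_ne_of_ne hj1 hj2]
    rw [gammaF, gammaF, linActScaled, affActZ]
    rw [if_neg hi, if_neg hi]
    simp only [Function.comp_apply, Function.comp]
    congr 1
    · congr 1
      have hsum : ∑ j, ν (τ j) * lam j = ∑ j, ν j * lam (τ j) := by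
        conv_rhs => rw [← Equiv.sum_comp τ (fun j => ν j * lam (τ j))]
        simp [hττ]
      rw [hsum]
    · refine Eq.trans ?_
        (prod_flip_reindex τ hττ
          (fun p => σ (lam (τ p.1) - lam (τ p.2)) ^ (ν p.1 - ν p.2))).symm
      apply Finset.prod_congr rfl
      intro p hp
      have hp' : p.1 < p.2 := by simpa using hp
      obtain ⟨p1, p2⟩ := p
      simp only at hp' ⊢
      by_cases h : τ p1 < τ p2
      · rw [if_pos h]
        simp [hττ, hτdef]
      · rw [if_neg h]
        obtain ⟨h1, h2⟩ := adj_flip (i-1) i p1 p2 hab hp' h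
        rw [h1, h2]
        simp only [hτdef, Equiv.swap_apply_left, Equiv.swap_apply_right]
        rw [hC (lam (i-1) - lam i) (sub_ne_zero.mpr hlam) (ν i - ν (i-1)),
          neg_sub, neg_sub]
end

section
/- Under the assumption 0 ≤ (s_iμ, α_i), i.e. −n ≤ (μ, α_i) ≤ 0, the inverse operator satisfies π⁽ⁿ⁾(T_i⁻¹)x^μ = σ((s_iμ, α_i))⁻¹ · x^{s_iμ}. -/
/-- The monomial x^λ in the Laurent polynomial ring F[x₁^{±1}, …, x_r^{±1}],
realized as the group algebra of the weight lattice ℤʳ. -/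
noncomputable def Xm {F : Type*} [Field F] (r : ℕ) (lam : Fin (r + 2) → ℤ) :
    AddMonoidAlgebra F (Fin (r + 2) → ℤ) :=
  AddMonoidAlgebra.single lam 1

/-- The root ε_a − ε_b ∈ ℤʳ. -/
def alphaN (r : ℕ) (a b : Fin (r + 2)) : Fin (r + 2) → ℤ :=
  fun t => if t = a then 1 else if t = b then -1 else 0

/-- The defining relation of the SSV operator π⁽ⁿ⁾(T) attached to the root α = ε_a − ε_b,
with denominators cleared (the Laurent polynomial ring is an integral domain and
1 − x^{nα} ≠ 0, so this determines T on monomials):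
(1 − x^{nα})·T(x^λ) = (k − k⁻¹)(x^λ − x^{λ − tₙ((λ,α))α}) + G_{(λ,α)}(1 − x^{nα})x^{s_αλ},
where tₙ(d) = d − (d mod n). -/
def heckeRel {F : Type*} [Field F] (r n : ℕ) (k : F) (G : ℤ → F) (a b : Fin (r + 2))
    (T : AddMonoidAlgebra F (Fin (r + 2) → ℤ) → AddMonoidAlgebra F (Fin (r + 2) → ℤ)) :
    Prop :=
  ∀ lam : Fin (r + 2) → ℤ,
    (1 - Xm r ((n : ℤ) • alphaN r a b)) * T (Xm r lam)
      = (k - k⁻¹) •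
          (Xm r lam
            - Xm r (lam - ((lam a - lam b) - (lam a - lam b) % (n : ℤ)) • alphaN r a b))
        + G (lam a - lam b) •
            ((1 - Xm r ((n : ℤ) • alphaN r a b)) * Xm r (lam ∘ Equiv.swap a b))

lemma Xm_mul {F : Type*} [Field F] (r : ℕ) (x y : Fin (r + 2) → ℤ) :
    Xm (F := F) r x * Xm r y = Xm r (x + y) := by
  simp [Xm, AddMonoidAlgebra.single_mul_single]

lemma one_sub_Xm_ne {F : Type*} [Field F] (r : ℕ) (c : Fin (r + 2) → ℤ) (hc : c ≠ 0) :
    (1 : AddMonoidAlgebra F (Fin (r + 2) → ℤ)) - Xm r c ≠ 0 := by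
  rw [sub_ne_zero]
  intro h
  rw [Xm, AddMonoidAlgebra.one_def] at h
  rcases AddMonoidAlgebra.single_inj.mp h with ⟨h1, -⟩ | ⟨h1, -⟩
  · exact hc h1.symm
  · exact one_ne_zero h1

/-- with T_i⁻¹ = T_i − k + k⁻¹ (from the Hecke relation), if
−n ≤ (μ, α_i) ≤ 0 (i.e. 0 ≤ (s_iμ, α_i) ≤ n) then
π⁽ⁿ⁾(T_i⁻¹)x^μ = σ((s_iμ, α_i))⁻¹ · x^{s_iμ}. -/
theorem stmt16 {F : Type*} [Field F] (r n : ℕ) (hn : 0 < n)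
    (k : F) (hk : k ≠ 0)
    (G : ℤ → F) (hG0 : G 0 = k) (hGinv : ∀ a : ℤ, G a * G (-a) = 1)
    (hGper : ∀ a : ℤ, G a = G (a % (n : ℤ)))
    (σ : ℤ → F) (hσ : ∀ a : ℤ, σ a = if 0 < a ∧ (n : ℤ) ∣ a then k⁻¹ else G a)
    (i : Fin (r + 1))
    (Ti : AddMonoidAlgebra F (Fin (r + 2) → ℤ) → AddMonoidAlgebra F (Fin (r + 2) → ℤ))
    (hTi : heckeRel r n k G i.castSucc i.succ Ti)
    (μ : Fin (r + 2) → ℤ)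
    (h0 : -(n : ℤ) ≤ μ i.castSucc - μ i.succ) (h1 : μ i.castSucc - μ i.succ ≤ 0) :
    Ti (Xm r μ) - (k - k⁻¹) • Xm r μ
      = (σ (μ i.succ - μ i.castSucc))⁻¹ • Xm r (μ ∘ Equiv.swap i.castSucc i.succ) := by
  set a := i.castSucc with ha
  set b := i.succ with hb
  have hab : a ≠ b := by
    simp [ha, hb]
    exact (Fin.castSucc_lt_succ (i := i)).ne
  set d := μ a - μ b with hd
  set c := (n : ℤ) • alphaN r a b with hc
  have hcne : c ≠ 0 := by
    intro h
    have := congrFun h a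
    simp [hc, alphaN, Pi.smul_apply] at this
    omega
  have hcancel : ∀ P Q : AddMonoidAlgebra F (Fin (r + 2) → ℤ),
      (1 - Xm r c) * P = (1 - Xm r c) * Q → P = Q := by
    intro P Q h
    exact mul_left_cancel₀ (one_sub_Xm_ne r c hcne) h
  have key := hTi μ
  rcases eq_or_lt_of_le h1 with hd0 | hdneg
  · -- d = 0 case
    have hd0' : d = 0 := hd0.symm ▸ rfl
    have hμab : μ a = μ b := by omega
    have hswap : μ ∘ Equiv.swap a b = μ := by
      funext t
      by_cases h1' : t = a
      · subst h1'; simp only [Function.comp_apply, Equiv.swap_apply_left]; omega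
      · by_cases h2' : t = b
        · subst h2'; simp only [Function.comp_apply, Equiv.swap_apply_right]; omega
        · simp [Equiv.swap_apply_of_ne_of_ne h1' h2']
    have hmod : d % (n : ℤ) = 0 := by rw [hd0']; simp
    rw [← hd, hmod, hd0'] at key
    simp only [sub_zero, zero_smul, sub_self, smul_zero, zero_add, hswap] at key
    have hT : Ti (Xm r μ) = G 0 • Xm r μ := by
      apply hcancel
      rw [key, mul_smul_comm]
    have hds : μ b - μ a = 0 := by omega
    rw [hT, hswap, hds, hσ 0]
    simp only [lt_irrefl, false_and, if_false, hG0]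
    rw [← sub_smul]
    congr 1
    field_simp
    ring
  · -- d < 0 case
    have hmod : d % (n : ℤ) = d + n := by
      have h2 : (d + n) % (n : ℤ) = d % n := by
        have := Int.add_mul_emod_self_left (a := d) (b := (n : ℤ)) (c := 1)
        rwa [mul_one] at this
      rw [← h2, Int.emod_eq_of_lt (by omega) (by omega)]
    have hsub : d - d % (n : ℤ) = -(n : ℤ) := by omega
    rw [← hd, hsub] at key
    have hexp : μ - (-(n : ℤ)) • alphaN r a b = μ + c := by
      rw [neg_smul, sub_neg_eq_add, hc]
    rw [hexp] at key
    have hfac : Xm (F := F) r μ - Xm r (μ + c) = (1 - Xm r c) * Xm r μ := by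
      rw [sub_mul, one_mul, Xm_mul, add_comm c μ]
    rw [hfac] at key
    have hT : Ti (Xm r μ) = (k - k⁻¹) • Xm r μ + G d • Xm r (μ ∘ Equiv.swap a b) := by
      apply hcancel
      rw [key, mul_add, mul_smul_comm, mul_smul_comm]
    rw [hT]
    have hds : μ b - μ a = -d := by omega
    rw [hds]
    simp only [add_sub_cancel_left]
    congr 1
    rw [hσ (-d)]
    by_cases hdn : -d = n
    · rw [if_pos ⟨by omega, by exact hdn ▸ dvd_refl _⟩]
      rw [inv_inv]
      have : G d = G 0 := by
        rw [hGper d, hmod]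
        congr 1
        omega
      rw [this, hG0]
    · rw [if_neg]
      · exact eq_inv_of_mul_eq_one_left (hGinv d)
      · rintro ⟨hpos, m, hm⟩
        have hmge : 0 < m := by nlinarith [Int.natCast_pos.mpr hn]
        have : (n : ℤ) ≤ -d := by
          rw [hm]; nlinarith [Int.natCast_pos.mpr hn]
        omega
end
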